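/- Let M(z) = P(Z ≥ z)/φ(z) be Mills' ratio for a standard Gaussian Z with density φ. Then for all x ≥ 0, x·M(x) ≤ (x² + 2)/(x² + 3) ≤ 1, and for all x ≥ 1, x·M(x) ≥ (x² + 1/(5x²))/(1 + x²) ≥ x²/(1 + x²). -/

import Mathlib

open MeasureTheory ProbabilityTheory Set Filter
open scoped Topology
open scoped ENNReal NNReal Real

noncomputable section

/-- The standard Gaussian upper tail `Ψ(x) = P(Z ≥ x)` for `Z ∼ N(0,1)`. -/
def gaussTail (x : ℝ) : ℝ := ((gaussianReal 0 1) (Set.Ici x)).toReal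

/-- The standard Gaussian density `φ(x) = (2π)^{-1/2} e^{-x²/2}`. -/
def gaussPhi (x : ℝ) : ℝ := (Real.sqrt (2 * Real.pi))⁻¹ * Real.exp (-x ^ 2 / 2)

/-- Mills' ratio `M(x) = Ψ(x)/φ(x)`. -/
def mills (x : ℝ) : ℝ := gaussTail x / gaussPhi x

lemma gaussPhi_pos (x : ℝ) : 0 < gaussPhi x := by
  apply mul_pos (inv_pos.2 (Real.sqrt_pos.2 (by positivity))) (Real.exp_pos _)

lemma gaussPhi_eq_pdf : gaussPhi = gaussianPDFReal 0 1 := by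
  funext x
  simp [gaussPhi, gaussianPDFReal]

lemma gaussTail_eq (x : ℝ) : gaussTail x = ∫ t in Ioi x, gaussPhi t := by
  rw [gaussTail, gaussianReal_apply_eq_integral 0 one_ne_zero,
    ENNReal.toReal_ofReal (integral_nonneg fun t => gaussianPDFReal_nonneg 0 1 t),
    ← gaussPhi_eq_pdf, integral_Ici_eq_integral_Ioi]

lemma integrableOn_gaussPhi (x : ℝ) : IntegrableOn gaussPhi (Ioi x) := by
  rw [gaussPhi_eq_pdf]
  exact (integrable_gaussianPDFReal 0 1).integrableOn

lemma hasDerivAt_gaussPhi (x : ℝ) : HasDerivAt gaussPhi (-x * gaussPhi x) x := by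
  have h1 : HasDerivAt (fun t : ℝ => -t ^ 2 / 2) (-x) x := by
    have := ((hasDerivAt_pow 2 x).neg.div_const 2)
    exact this.congr_deriv (by norm_num <;> ring)
  have := (h1.exp).const_mul (Real.sqrt (2 * Real.pi))⁻¹
  refine this.congr_deriv ?_
  simp [gaussPhi]
  ring

lemma tendsto_gaussPhi : Tendsto gaussPhi atTop (𝓝 0) := by
  have h1 : Tendsto (fun x : ℝ => -x ^ 2 / 2) atTop atBot := by
    have h2 : Tendsto (fun x : ℝ => x ^ 2) atTop atTop :=
      tendsto_pow_atTop (by norm_num : (2:ℕ) ≠ 0)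
    have h3 : Tendsto (fun x : ℝ => -x ^ 2) atTop atBot := tendsto_neg_atBot_iff.mpr h2
    exact h3.atBot_div_const (by norm_num)
  have := (Real.tendsto_exp_atBot.comp h1).const_mul (Real.sqrt (2 * Real.pi))⁻¹
  rw [show (0:ℝ) = (Real.sqrt (2 * Real.pi))⁻¹ * 0 by ring]
  exact this.congr fun x => by simp [gaussPhi, Function.comp]

lemma upper_deriv (t : ℝ) (ht : 0 < t) :
    HasDerivAt (fun u : ℝ => -(gaussPhi u * ((u^2+2)/(u^3+3*u))))
      (gaussPhi t * (1 + 6/(t^3+3*t)^2)) t := by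
  have hD : t^3 + 3*t ≠ 0 := by positivity
  have hnum : HasDerivAt (fun u : ℝ => u^2+2) (2*t) t := by
    simpa using (hasDerivAt_pow 2 t).add_const 2
  have hden : HasDerivAt (fun u : ℝ => u^3+3*u) (3*t^2+3) t := by
    have := (hasDerivAt_pow 3 t).add ((hasDerivAt_id t).const_mul 3)
    exact this.congr_deriv (by norm_num <;> ring)
  have hr := hnum.div hden hD
  have := ((hasDerivAt_gaussPhi t).mul hr).neg
  refine this.congr_deriv ?_
  simp only [Pi.div_apply]
  field_simp
  ring

lemma upper_tail (x : ℝ) (hx : 0 < x) :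
    gaussTail x ≤ gaussPhi x * ((x^2+2)/(x^3+3*x)) := by
  set F' : ℝ → ℝ := fun t => gaussPhi t * (1 + 6/(t^3+3*t)^2) with hF'
  have hderiv : ∀ t ∈ Ici x,
      HasDerivAt (fun u => -(gaussPhi u * ((u^2+2)/(u^3+3*u)))) (F' t) t :=
    fun t ht => upper_deriv t (lt_of_lt_of_le hx ht)
  have hpos : ∀ t ∈ Ioi x, 0 ≤ F' t := by
    intro t _
    have := gaussPhi_pos t
    have h6 : (0:ℝ) ≤ 6/(t^3+3*t)^2 := by positivity
    simp only [hF']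
    nlinarith
  have hsq : Tendsto (fun u : ℝ => gaussPhi u * ((u^2+2)/(u^3+3*u))) atTop (𝓝 0) := by
    apply squeeze_zero'
    · filter_upwards [eventually_ge_atTop (1:ℝ)] with t ht
      have h0 : (0:ℝ) < t := lt_of_lt_of_le one_pos ht
      exact mul_nonneg (gaussPhi_pos t).le (by positivity)
    · filter_upwards [eventually_ge_atTop (1:ℝ)] with t ht
      have h0 : (0:ℝ) < t := lt_of_lt_of_le one_pos ht
      have h3 : (t^2+2)/(t^3+3*t) ≤ 3 := by
        rw [div_le_iff₀ (by positivity)]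
        nlinarith
      have := (gaussPhi_pos t).le
      calc gaussPhi t * ((t^2+2)/(t^3+3*t)) ≤ gaussPhi t * 3 :=
            mul_le_mul_of_nonneg_left h3 this
        _ = 3 * gaussPhi t := by ring
    · have := tendsto_gaussPhi.const_mul (3:ℝ)
      simpa using this
  have htend : Tendsto (fun u : ℝ => -(gaussPhi u * ((u^2+2)/(u^3+3*u)))) atTop (𝓝 0) := by
    simpa using hsq.neg
  have key := integral_Ioi_of_hasDerivAt_of_nonneg' hderiv hpos htend
  have hint : IntegrableOn F' (Ioi x) :=
    integrableOn_Ioi_deriv_of_nonneg' hderiv hpos htend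
  rw [gaussTail_eq]
  calc ∫ t in Ioi x, gaussPhi t ≤ ∫ t in Ioi x, F' t := by
        apply setIntegral_mono_on (integrableOn_gaussPhi x) hint measurableSet_Ioi
        intro t _
        have := (gaussPhi_pos t).le
        have h6 : (0:ℝ) ≤ 6/(t^3+3*t)^2 := by positivity
        simp only [hF']
        nlinarith
    _ = gaussPhi x * ((x^2+2)/(x^3+3*x)) := by rw [key]; ring

lemma lower_deriv (t : ℝ) (ht : 0 < t) :
    HasDerivAt (fun u : ℝ => -(gaussPhi u * ((u^4+1/5)/(u^3+u^5))))
      (gaussPhi t * (1 - (3/5)*t^2*(3*t^2+1)*(t^2-1)/(t^3+t^5)^2)) t := by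
  have hD : t^3 + t^5 ≠ 0 := by positivity
  have hnum : HasDerivAt (fun u : ℝ => u^4+1/5) (4*t^3) t := by
    simpa using (hasDerivAt_pow 4 t).add_const (1/5)
  have hden : HasDerivAt (fun u : ℝ => u^3+u^5) (3*t^2+5*t^4) t := by
    have := (hasDerivAt_pow 3 t).add (hasDerivAt_pow 5 t)
    exact this.congr_deriv (by norm_num)
  have hr := hnum.div hden hD
  have := ((hasDerivAt_gaussPhi t).mul hr).neg
  refine this.congr_deriv ?_
  simp only [Pi.div_apply]
  field_simp
  ring

lemma lower_tail (x : ℝ) (hx : 1 ≤ x) :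
    gaussPhi x * ((x^4+1/5)/(x^3+x^5)) ≤ gaussTail x := by
  set G' : ℝ → ℝ :=
    fun t => gaussPhi t * (1 - (3/5)*t^2*(3*t^2+1)*(t^2-1)/(t^3+t^5)^2) with hG'
  have hx0 : (0:ℝ) < x := lt_of_lt_of_le one_pos hx
  have hderiv : ∀ t ∈ Ici x,
      HasDerivAt (fun u => -(gaussPhi u * ((u^4+1/5)/(u^3+u^5)))) (G' t) t :=
    fun t ht => lower_deriv t (lt_of_lt_of_le hx0 ht)
  have hp : ∀ t : ℝ, 1 ≤ t →
      (0:ℝ) ≤ (3/5)*t^2*(3*t^2+1)*(t^2-1)/(t^3+t^5)^2 ∧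
      (3/5)*t^2*(3*t^2+1)*(t^2-1)/(t^3+t^5)^2 ≤ 1 := by
    intro t ht
    have ht0 : (0:ℝ) < t := lt_of_lt_of_le one_pos ht
    constructor
    · have h1 : (0:ℝ) ≤ t^2-1 := by nlinarith
      exact div_nonneg (mul_nonneg (by positivity) h1) (by positivity)
    · rw [div_le_one (by positivity)]
      have h6 : t^6 ≤ t^10 := pow_le_pow_right₀ ht (by norm_num)
      nlinarith [pow_pos ht0 8, pow_pos ht0 4, pow_pos ht0 2]
  have hpos : ∀ t ∈ Ioi x, 0 ≤ G' t := by
    intro t htx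
    have ht : (1:ℝ) ≤ t := le_trans hx (le_of_lt htx)
    have := (hp t ht).2
    exact mul_nonneg (gaussPhi_pos t).le (by linarith)
  have hsq : Tendsto (fun u : ℝ => gaussPhi u * ((u^4+1/5)/(u^3+u^5))) atTop (𝓝 0) := by
    apply squeeze_zero'
    · filter_upwards [eventually_ge_atTop (1:ℝ)] with t ht
      have h0 : (0:ℝ) < t := lt_of_lt_of_le one_pos ht
      exact mul_nonneg (gaussPhi_pos t).le (by positivity)
    · filter_upwards [eventually_ge_atTop (1:ℝ)] with t ht
      have h0 : (0:ℝ) < t := lt_of_lt_of_le one_pos ht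
      have h3 : (t^4+1/5)/(t^3+t^5) ≤ 2 := by
        rw [div_le_iff₀ (by positivity)]
        have h45 : t^4 ≤ t^5 := pow_le_pow_right₀ ht (by norm_num)
        have h3 : (1:ℝ) ≤ t^3 := one_le_pow₀ ht
        nlinarith
      calc gaussPhi t * ((t^4+1/5)/(t^3+t^5)) ≤ gaussPhi t * 2 :=
            mul_le_mul_of_nonneg_left h3 (gaussPhi_pos t).le
        _ = 2 * gaussPhi t := by ring
    · have := tendsto_gaussPhi.const_mul (2:ℝ)
      simpa using this
  have htend : Tendsto (fun u : ℝ => -(gaussPhi u * ((u^4+1/5)/(u^3+u^5)))) atTop (𝓝 0) := by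
    simpa using hsq.neg
  have key := integral_Ioi_of_hasDerivAt_of_nonneg' hderiv hpos htend
  have hint : IntegrableOn G' (Ioi x) :=
    integrableOn_Ioi_deriv_of_nonneg' hderiv hpos htend
  rw [gaussTail_eq]
  calc gaussPhi x * ((x^4+1/5)/(x^3+x^5)) = ∫ t in Ioi x, G' t := by rw [key]; ring
    _ ≤ ∫ t in Ioi x, gaussPhi t := by
        apply setIntegral_mono_on hint (integrableOn_gaussPhi x) measurableSet_Ioi
        intro t htx
        have ht : (1:ℝ) ≤ t := le_trans hx (le_of_lt htx)
        have := (hp t ht).1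
        simp only [hG']
        nlinarith [gaussPhi_pos t]

/-- Mills' ratio bounds: for all `x ≥ 0`,
`x·M(x) ≤ (x²+2)/(x²+3) ≤ 1`, and for all `x ≥ 1`,
`x²/(1+x²) ≤ (x² + 1/(5x²))/(1+x²) ≤ x·M(x)`. -/
theorem statement14 :
    (∀ x : ℝ, 0 ≤ x →
      x * mills x ≤ (x ^ 2 + 2) / (x ^ 2 + 3) ∧ (x ^ 2 + 2) / (x ^ 2 + 3) ≤ 1) ∧
    (∀ x : ℝ, 1 ≤ x →
      x ^ 2 / (1 + x ^ 2) ≤ (x ^ 2 + 1 / (5 * x ^ 2)) / (1 + x ^ 2) ∧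
      (x ^ 2 + 1 / (5 * x ^ 2)) / (1 + x ^ 2) ≤ x * mills x) := by
  constructor
  · intro x hx
    constructor
    · rcases hx.eq_or_lt with rfl | hx0
      · norm_num
      · have h1 : mills x ≤ (x^2+2)/(x^3+3*x) := by
          rw [mills, div_le_iff₀ (gaussPhi_pos x)]
          calc gaussTail x ≤ gaussPhi x * ((x^2+2)/(x^3+3*x)) := upper_tail x hx0
            _ = (x^2+2)/(x^3+3*x) * gaussPhi x := by ring
        calc x * mills x ≤ x * ((x^2+2)/(x^3+3*x)) :=
              mul_le_mul_of_nonneg_left h1 hx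
          _ = (x ^ 2 + 2) / (x ^ 2 + 3) := by
              have hne : x ≠ 0 := ne_of_gt hx0
              have h3 : x^2 + 3 ≠ 0 := by positivity
              field_simp
    · rw [div_le_one (by positivity)]
      linarith
  · intro x hx
    have hx0 : (0:ℝ) < x := lt_of_lt_of_le one_pos hx
    constructor
    · have h0 : (0:ℝ) ≤ 1/(5*x^2) := by positivity
      gcongr
      linarith
    · have h1 : (x^4+1/5)/(x^3+x^5) ≤ mills x := by
        rw [mills, le_div_iff₀ (gaussPhi_pos x)]
        calc (x^4+1/5)/(x^3+x^5) * gaussPhi x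
            = gaussPhi x * ((x^4+1/5)/(x^3+x^5)) := by ring
          _ ≤ gaussTail x := lower_tail x hx
      calc (x ^ 2 + 1 / (5 * x ^ 2)) / (1 + x ^ 2)
          = x * ((x^4+1/5)/(x^3+x^5)) := by
            have hne : x ≠ 0 := ne_of_gt hx0
            field_simp
        _ ≤ x * mills x := mul_le_mul_of_nonneg_left h1 hx0.le
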